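/- In the category of sets, for a polynomial functor in normal form F X = Σᵢ Aᵢ × (Bᵢ → X), the set C of partial functions f : List B ⇀ Σᵢ Aᵢ (where B = Σᵢ Bᵢ) satisfying (i) f is defined at the empty list, and (ii) f is defined at p ++ [inᵢ b] iff f p lies in the i-th summand, carries a final F-coalgebra structure. -/

import Mathlib

universe u

/-- The polynomial functor in normal form `F X = Σ i, A i × (B i → X)`. -/
def PolyF {n : ℕ} (A B : Fin n → Type u) (X : Type u) : Type u :=
  Σ i, A i × (B i → X)

/-- The set `C` of partial functions `f : List B ⇀ Σ i, A i` (with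
`B = Σ i, B i`) such that (i) `f` is defined at the empty list and (ii) `f` is
defined at `p ++ [⟨i, b⟩]` iff `f p` lies in the `i`-th summand. -/
def TreeCarrier {n : ℕ} (A B : Fin n → Type u) : Type u :=
  {f : List (Σ i, B i) → Option (Σ i, A i) //
    (f []).isSome = true ∧
    ∀ (p : List (Σ i, B i)) (i : Fin n) (b : B i),
      (f (p ++ [⟨i, b⟩])).isSome = true ↔ ∃ x : A i, f p = some ⟨i, x⟩}

/-- The coalgebra structure on `TreeCarrier A B`: if `f [] = ⟨i, x⟩` then `f`
is sent to `⟨i, (x, fun b => subtree of f along ⟨i, b⟩)⟩`. -/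
def treeStr {n : ℕ} (A B : Fin n → Type u) (f : TreeCarrier A B) :
    PolyF A B (TreeCarrier A B) :=
  let r : Σ i, A i := (f.1 []).get f.2.1
  have hr : f.1 [] = some r := (Option.some_get f.2.1).symm
  ⟨r.1, (r.2, fun b =>
    ⟨fun p => f.1 (⟨r.1, b⟩ :: p), by
      constructor
      · show (f.1 ([] ++ [⟨r.1, b⟩])).isSome = true
        exact (f.2.2 [] r.1 b).mpr ⟨r.2, by rw [hr]⟩
      · intro p j b'
        have := f.2.2 (⟨r.1, b⟩ :: p) j b'
        simpa [List.cons_append] using this⟩)⟩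

theorem treeStr_root {n : ℕ} (A B : Fin n → Type u) (f : TreeCarrier A B) :
    f.1 [] = some ⟨(treeStr A B f).1, (treeStr A B f).2.1⟩ :=
  (Option.some_get f.2.1).symm

theorem treeStr_sub {n : ℕ} (A B : Fin n → Type u) (f : TreeCarrier A B) :
    ∀ (b : B (treeStr A B f).1) (p : List (Σ i, B i)),
      f.1 (⟨(treeStr A B f).1, b⟩ :: p) = (((treeStr A B f).2.2) b).1 p :=
  fun _ _ => rfl

theorem poly_unique {n : ℕ} (A B : Fin n → Type u) (f : TreeCarrier A B)
    {i : Fin n} {a : A i} {g : B i → TreeCarrier A B}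
    {i' : Fin n} {a' : A i'} {g' : B i' → TreeCarrier A B}
    (h1 : f.1 [] = some ⟨i, a⟩)
    (h2 : ∀ (b : B i) p, f.1 (⟨i, b⟩ :: p) = (g b).1 p)
    (h1' : f.1 [] = some ⟨i', a'⟩)
    (h2' : ∀ (b : B i') p, f.1 (⟨i', b⟩ :: p) = (g' b).1 p) :
    (⟨i, (a, g)⟩ : PolyF A B (TreeCarrier A B)) = ⟨i', (a', g')⟩ := by
  have he : (⟨i, a⟩ : Σ i, A i) = ⟨i', a'⟩ := by
    rw [← Option.some_inj, ← h1, h1']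
  rw [Sigma.mk.inj_iff] at he
  obtain ⟨e1, e2⟩ := he
  subst e1
  have e2' := eq_of_heq e2; subst e2'
  have hg : g = g' := funext fun b => Subtype.ext (funext fun p => by
    rw [← h2 b p, h2' b p])
  rw [hg]

theorem tree_none_ext {n : ℕ} {A B : Fin n → Type u} (f : TreeCarrier A B) :
    ∀ (p q : List (Σ i, B i)), f.1 q = none → f.1 (q ++ p) = none := by
  intro p
  induction p using List.reverseRecOn with
  | nil => intro q h; simpa using h
  | append_singleton p x ih =>
    intro q h
    obtain ⟨i, b⟩ := x
    rw [← List.append_assoc, ← Option.not_isSome_iff_eq_none]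
    intro hs
    obtain ⟨x, hx⟩ := (f.2.2 (q ++ p) i b).mp hs
    rw [ih q h] at hx
    exact Option.some_ne_none _ hx.symm

def uFun {n : ℕ} (A B : Fin n → Type u) (D : Type u) (d : D → PolyF A B D) :
    D → List (Σ i, B i) → Option (Σ i, A i)
  | z, [] => some ⟨(d z).1, (d z).2.1⟩
  | z, ⟨i, b⟩ :: p =>
      if h : i = (d z).1 then uFun A B D d ((d z).2.2 (h ▸ b)) p else none

theorem uFun_mem {n : ℕ} (A B : Fin n → Type u) (D : Type u)
    (d : D → PolyF A B D) (z : D) :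
    (uFun A B D d z []).isSome = true ∧
    ∀ (p : List (Σ i, B i)) (i : Fin n) (b : B i),
      (uFun A B D d z (p ++ [⟨i, b⟩])).isSome = true ↔
        ∃ x : A i, uFun A B D d z p = some ⟨i, x⟩ := by
  refine ⟨rfl, ?_⟩
  intro p
  induction p generalizing z with
  | nil =>
    intro i b
    simp only [List.nil_append, uFun]
    by_cases h : i = (d z).1
    · subst h
      rw [dif_pos rfl]
      constructor
      · intro _; exact ⟨(d z).2.1, rfl⟩
      · intro _; simp [uFun]
    · rw [dif_neg h]
      constructor
      · intro hs; simp at hs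
      · rintro ⟨x, hx⟩
        rw [Option.some_inj, Sigma.mk.inj_iff] at hx
        exact absurd hx.1.symm h
  | cons hd tl ih =>
    intro i b
    obtain ⟨j, b'⟩ := hd
    simp only [List.cons_append, uFun]
    by_cases h : j = (d z).1
    · rw [dif_pos h, dif_pos h]
      exact ih ((d z).2.2 (h ▸ b')) i b
    · rw [dif_neg h, dif_neg h]
      constructor
      · intro hs; simp at hs
      · rintro ⟨x, hx⟩; exact absurd hx.symm (Option.some_ne_none _)

/-- In the category of sets, `TreeCarrier A B` with the structure map `treeStr`
is a final coalgebra for the polynomial functor `F X = Σ i, A i × (B i → X)`: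
for every coalgebra `d : D → F D` there is a unique coalgebra morphism
`u : D → TreeCarrier A B`. -/
theorem stmt_13 {n : ℕ} (A B : Fin n → Type u) (D : Type u)
    (d : D → PolyF A B D) :
    ∃! u : D → TreeCarrier A B,
      ∀ z : D,
        treeStr A B (u z) =
          ⟨(d z).1, ((d z).2.1, fun b => u ((d z).2.2 b))⟩ := by
  refine ⟨fun z => ⟨uFun A B D d z, uFun_mem A B D d z⟩, ?_, ?_⟩
  · intro z
    exact poly_unique A B ⟨uFun A B D d z, uFun_mem A B D d z⟩
      (treeStr_root A B ⟨uFun A B D d z, uFun_mem A B D d z⟩)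
      (treeStr_sub A B ⟨uFun A B D d z, uFun_mem A B D d z⟩) rfl
      (fun b p => by simp [uFun])
    
  · intro v hv
    funext z0
    apply Subtype.ext
    funext p0
    show (v z0).1 p0 = uFun A B D d z0 p0
    induction p0 generalizing z0 with
    | nil =>
      have hroot := treeStr_root A B (v z0)
      rw [hv z0] at hroot
      exact hroot
    | cons hd tl ih =>
      obtain ⟨i, b⟩ := hd
      have hroot := treeStr_root A B (v z0)
      have hsub := treeStr_sub A B (v z0)
      rw [hv z0] at hroot hsub
      by_cases h : i = (d z0).1
      · subst h
        rw [hsub b tl, ih ((d z0).2.2 b)]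
        show uFun A B D d ((d z0).2.2 b) tl = uFun A B D d z0 (⟨(d z0).1, b⟩ :: tl)
        simp [uFun]
      · have hnone : (v z0).1 [⟨i, b⟩] = none := by
          rw [← Option.not_isSome_iff_eq_none]
          intro hs
          obtain ⟨x, hx⟩ := ((v z0).2.2 [] i b).mp (by simpa using hs)
          rw [hroot, Option.some_inj, Sigma.mk.inj_iff] at hx
          exact h hx.1.symm
        have hext := tree_none_ext (v z0) tl [⟨i, b⟩] hnone
        simp only [List.singleton_append] at hext
        rw [hext]
        show _ = uFun A B D d z0 (⟨i, b⟩ :: tl)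
        simp [uFun, dif_neg h]
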